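/- arXiv:1910.00043 — 4 statements merged into one kernel-verified Lean document; each statement's English description precedes it below -/
import Mathlib

section
/- For all real numbers a, b > 1, the beta function satisfies beta(a,b) ≥ exp(2 - a - b). -/
open MeasureTheory Set Real

lemma log_intervalIntegrable : IntervalIntegrable Real.log volume 0 1 := by
  rw [intervalIntegrable_iff_integrableOn_Ioc_of_le (by norm_num)]
  have h2 : IntegrableOn (fun t : ℝ => 2 * t ^ (-(1/2) : ℝ)) (Ioc 0 1) := by
    have := (intervalIntegral.intervalIntegrable_rpow' (r := (-(1/2) : ℝ)) (by norm_num)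
      (a := 0) (b := 1)).const_mul 2
    rwa [intervalIntegrable_iff_integrableOn_Ioc_of_le (by norm_num)] at this
  refine h2.integrable.mono' Real.measurable_log.aestronglyMeasurable ?_
  rw [ae_restrict_iff' measurableSet_Ioc]
  filter_upwards with t ht
  have ht0 : 0 < t := ht.1
  have ht1 : t ≤ 1 := ht.2
  have hlog : Real.log t ≤ 0 := Real.log_nonpos ht0.le ht1
  rw [Real.norm_eq_abs, abs_of_nonpos hlog]
  have h1 : Real.log (t ^ (-(1/2) : ℝ)) ≤ t ^ (-(1/2) : ℝ) - 1 :=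
    Real.log_le_sub_one_of_pos (Real.rpow_pos_of_pos ht0 _)
  rw [Real.log_rpow ht0] at h1
  have h0 : (0:ℝ) ≤ t ^ (-(1/2) : ℝ) := (Real.rpow_pos_of_pos ht0 _).le
  nlinarith

lemma integral_log_zero_one : (∫ x in (0:ℝ)..1, Real.log x) = -1 := by
  have hcont : ContinuousOn (fun x : ℝ => x * Real.log x - x) (Icc 0 1) :=
    (Real.continuous_mul_log.sub continuous_id).continuousOn
  have hderiv : ∀ x ∈ Ioo (0:ℝ) 1,
      HasDerivWithinAt (fun x : ℝ => x * Real.log x - x) (Real.log x) (Ioi x) x := by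
    intro x hx
    have : HasDerivAt (fun x : ℝ => x * Real.log x - x) (Real.log x + 1 - 1) x :=
      (Real.hasDerivAt_mul_log hx.1.ne').sub (hasDerivAt_id x)
    simpa using this.hasDerivWithinAt
  rw [intervalIntegral.integral_eq_sub_of_hasDeriv_right_of_le (by norm_num) hcont hderiv
    log_intervalIntegrable]
  simp

theorem beta_lower_bound (a b : ℝ) (ha : 1 < a) (hb : 1 < b) :
    Real.exp (2 - a - b) ≤ ∫ t in (0:ℝ)..1, t ^ (a - 1) * (1 - t) ^ (b - 1) := by
  set μ : Measure ℝ := volume.restrict (Ioo 0 1) with hμ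
  haveI : IsProbabilityMeasure μ := ⟨by simp [hμ, Real.volume_Ioo]⟩
  set f : ℝ → ℝ := fun t => (a - 1) * Real.log t + (b - 1) * Real.log (1 - t) with hf
  -- integrability of log pieces over Ioo 0 1
  have hli : IntegrableOn Real.log (Ioo 0 1) :=
    ((intervalIntegrable_iff_integrableOn_Ioc_of_le (by norm_num)).1
      log_intervalIntegrable).mono_set Ioo_subset_Ioc_self
  have hli2 : IntegrableOn (fun t : ℝ => Real.log (1 - t)) (Ioo 0 1) := by
    have := log_intervalIntegrable.comp_sub_left 1
    simp only [sub_zero, sub_self] at this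
    exact ((intervalIntegrable_iff_integrableOn_Ioc_of_le (by norm_num)).1
      this.symm).mono_set Ioo_subset_Ioc_self
  have hfi : Integrable f μ :=
    ((hli.const_mul (a - 1)).add (hli2.const_mul (b - 1)))
  -- measurability of f
  have hfm : Measurable f := by
    exact ((Real.measurable_log.const_mul _).add ((Real.measurable_log.comp (measurable_const.sub measurable_id)).const_mul _))
  -- integrability of exp ∘ f
  have hfneg : ∀ t ∈ Ioo (0:ℝ) 1, f t ≤ 0 := by
    intro t ht
    have h1 : Real.log t ≤ 0 := Real.log_nonpos ht.1.le ht.2.le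
    have h2 : Real.log (1 - t) ≤ 0 := Real.log_nonpos (by linarith [ht.2]) (by linarith [ht.1])
    have := mul_nonneg (by linarith : (0:ℝ) ≤ a - 1) (neg_nonneg.2 h1)
    have := mul_nonneg (by linarith : (0:ℝ) ≤ b - 1) (neg_nonneg.2 h2)
    simp only [hf]
    nlinarith
  have hgi : Integrable (Real.exp ∘ f) μ := by
    refine (integrable_const (1:ℝ)).mono' ((Real.measurable_exp.comp hfm).aestronglyMeasurable) ?_
    rw [hμ, ae_restrict_iff' measurableSet_Ioo]
    filter_upwards with t ht
    simp only [Function.comp_apply, Real.norm_eq_abs, abs_of_nonneg (Real.exp_pos _).le]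
    exact Real.exp_le_one_iff.2 (hfneg t ht)
  -- Jensen
  have hjensen : Real.exp (∫ t, f t ∂μ) ≤ ∫ t, Real.exp (f t) ∂μ := by
    have := convexOn_exp.map_integral_le (μ := μ) (f := f)
      Real.continuous_exp.continuousOn isClosed_univ
      (Filter.Eventually.of_forall fun _ => mem_univ _) hfi hgi
    exact this
  -- compute ∫ f
  have hlog1 : (∫ t in Ioo (0:ℝ) 1, Real.log t) = -1 := by
    rw [← MeasureTheory.integral_Ioc_eq_integral_Ioo,
      ← intervalIntegral.integral_of_le (by norm_num : (0:ℝ) ≤ 1)]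
    exact integral_log_zero_one
  have hlog2 : (∫ t in Ioo (0:ℝ) 1, Real.log (1 - t)) = -1 := by
    rw [← MeasureTheory.integral_Ioc_eq_integral_Ioo,
      ← intervalIntegral.integral_of_le (by norm_num : (0:ℝ) ≤ 1)]
    rw [intervalIntegral.integral_comp_sub_left (fun x => Real.log x) 1]
    norm_num [integral_log_zero_one]
  have hIf : (∫ t, f t ∂μ) = 2 - a - b := by
    rw [hμ, hf]
    rw [integral_add (hli.const_mul (a - 1)) (hli2.const_mul (b - 1)),
      integral_const_mul, integral_const_mul, hlog1, hlog2]
    ring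
  -- identify ∫ exp ∘ f with the beta integrand
  have hcongr : (∫ t, Real.exp (f t) ∂μ) = ∫ t in Ioo (0:ℝ) 1, t ^ (a-1) * (1-t) ^ (b-1) := by
    rw [hμ]
    refine setIntegral_congr_fun measurableSet_Ioo fun t ht => ?_
    have ht0 : 0 < t := ht.1
    have ht1 : 0 < 1 - t := by linarith [ht.2]
    rw [hf]
    simp only
    rw [Real.exp_add, Real.rpow_def_of_pos ht0, Real.rpow_def_of_pos ht1,
      mul_comm (Real.log t), mul_comm (Real.log (1 - t))]
  rw [intervalIntegral.integral_of_le (by norm_num : (0:ℝ) ≤ 1),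
    MeasureTheory.integral_Ioc_eq_integral_Ioo]
  calc Real.exp (2 - a - b) = Real.exp (∫ t, f t ∂μ) := by rw [hIf]
    _ ≤ ∫ t, Real.exp (f t) ∂μ := hjensen
    _ = _ := hcongr
end

section
/- For all real numbers a, b > 1, the beta function satisfies beta(a,b) ≤ (a + b - 1) / ((2a - 1)(2b - 1)). -/
theorem beta_upper_bound (a b : ℝ) (ha : 1 < a) (hb : 1 < b) :
    (∫ t in (0:ℝ)..1, t ^ (a - 1) * (1 - t) ^ (b - 1)) ≤
      (a + b - 1) / ((2 * a - 1) * (2 * b - 1)) := by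
  have ha' : (0:ℝ) < a - 1 := by linarith
  have hb' : (0:ℝ) < b - 1 := by linarith
  have hca : Continuous fun t : ℝ => t ^ (a - 1) :=
    Real.continuous_rpow_const (le_of_lt ha')
  have hcb : Continuous fun t : ℝ => (1 - t) ^ (b - 1) :=
    (Real.continuous_rpow_const (le_of_lt hb')).comp (continuous_const.sub continuous_id)
  have hca2 : Continuous fun t : ℝ => t ^ (2 * a - 2) :=
    Real.continuous_rpow_const (by linarith)
  have hcb2 : Continuous fun t : ℝ => (1 - t) ^ (2 * b - 2) :=
    (Real.continuous_rpow_const (by linarith : (0:ℝ) ≤ 2 * b - 2)).comp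
      (continuous_const.sub continuous_id)
  have hI1 : IntervalIntegrable (fun t : ℝ => t ^ (a - 1) * (1 - t) ^ (b - 1))
      MeasureTheory.volume 0 1 := (hca.mul hcb).intervalIntegrable 0 1
  have hI2 : IntervalIntegrable
      (fun t : ℝ => (t ^ (2 * a - 2) + (1 - t) ^ (2 * b - 2)) / 2)
      MeasureTheory.volume 0 1 := ((hca2.add hcb2).div_const 2).intervalIntegrable 0 1
  have hmono : (∫ t in (0:ℝ)..1, t ^ (a - 1) * (1 - t) ^ (b - 1)) ≤
      ∫ t in (0:ℝ)..1, (t ^ (2 * a - 2) + (1 - t) ^ (2 * b - 2)) / 2 := by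
    apply intervalIntegral.integral_mono_on (by norm_num) hI1 hI2
    intro t ht
    rcases ht with ⟨ht0, ht1⟩
    have hx : (0:ℝ) ≤ t ^ (a - 1) := Real.rpow_nonneg ht0 _
    have hy : (0:ℝ) ≤ (1 - t) ^ (b - 1) := Real.rpow_nonneg (by linarith) _
    have hx2 : t ^ (2 * a - 2) = (t ^ (a - 1)) ^ (2:ℕ) := by
      rw [← Real.rpow_natCast (t ^ (a - 1)) 2, ← Real.rpow_mul ht0]
      norm_num; ring_nf
    have hy2 : (1 - t) ^ (2 * b - 2) = ((1 - t) ^ (b - 1)) ^ (2:ℕ) := by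
      rw [← Real.rpow_natCast ((1 - t) ^ (b - 1)) 2, ← Real.rpow_mul (by linarith : (0:ℝ) ≤ 1 - t)]
      norm_num; ring_nf
    rw [hx2, hy2]
    nlinarith [sq_nonneg (t ^ (a - 1) - (1 - t) ^ (b - 1))]
  have hval1 : (∫ t in (0:ℝ)..1, t ^ (2 * a - 2)) = 1 / (2 * a - 1) := by
    rw [integral_rpow (Or.inl (by linarith))]
    rw [Real.one_rpow, Real.zero_rpow (by linarith)]
    ring_nf
  have hval2 : (∫ t in (0:ℝ)..1, (1 - t) ^ (2 * b - 2)) = 1 / (2 * b - 1) := by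
    have := intervalIntegral.integral_comp_sub_left (a := 0) (b := 1)
      (fun x : ℝ => x ^ (2 * b - 2)) 1
    simp only [sub_zero, sub_self] at this
    rw [this, integral_rpow (Or.inl (by linarith))]
    rw [Real.one_rpow, Real.zero_rpow (by linarith)]
    ring_nf
  have hsplit : (∫ t in (0:ℝ)..1, (t ^ (2 * a - 2) + (1 - t) ^ (2 * b - 2)) / 2)
      = (1 / (2 * a - 1) + 1 / (2 * b - 1)) / 2 := by
    have h1 : IntervalIntegrable (fun t : ℝ => t ^ (2 * a - 2)) MeasureTheory.volume 0 1 :=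
      hca2.intervalIntegrable 0 1
    have h2 : IntervalIntegrable (fun t : ℝ => (1 - t) ^ (2 * b - 2)) MeasureTheory.volume 0 1 :=
      hcb2.intervalIntegrable 0 1
    rw [intervalIntegral.integral_div, intervalIntegral.integral_add h1 h2, hval1, hval2]
  rw [hsplit] at hmono
  refine hmono.trans (le_of_eq ?_)
  have h2a : (2 * a - 1) ≠ 0 := by linarith
  have h2b : (2 * b - 1) ≠ 0 := by linarith
  field_simp
  ring
end

section
/- The function x ↦ Γ(x - a)/Γ(x - b) is strictly increasing on the interval where both arguments are positive, provided a < b. -/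
open Set Real

private lemma logGamma_midpoint_lt (p q : ℝ) (hp : 0 < p) (hpq : p < q) :
    Real.log (Real.Gamma ((p + q) / 2)) <
      (Real.log (Real.Gamma p) + Real.log (Real.Gamma q)) / 2 := by
  have hq : 0 < q := hp.trans hpq
  have hm : 0 < (p + q) / 2 := by linarith
  have hconv := Real.convexOn_log_Gamma
  have hrec : ∀ t : ℝ, 0 < t →
      Real.log (Real.Gamma (t + 1)) = Real.log (Real.Gamma t) + Real.log t := by
    intro t ht
    rw [Real.Gamma_add_one ht.ne', Real.log_mul ht.ne' (Real.Gamma_pos_of_pos ht).ne',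
      add_comm]
  have h1 := hconv.2 (show p + 1 ∈ Ioi (0:ℝ) by simp; linarith)
    (show q + 1 ∈ Ioi (0:ℝ) by simp; linarith)
    (by norm_num : (0:ℝ) ≤ 1/2) (by norm_num : (0:ℝ) ≤ 1/2) (by norm_num)
  simp only [smul_eq_mul, Function.comp_apply] at h1
  have he : (1/2 : ℝ) * (p + 1) + (1/2 : ℝ) * (q + 1) = (p + q) / 2 + 1 := by ring
  rw [he, hrec _ hm, hrec _ hp, hrec _ hq] at h1
  have h2 := strictConcaveOn_log_Ioi.2 (mem_Ioi.2 hp) (mem_Ioi.2 hq) hpq.ne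
    (by norm_num : (0:ℝ) < 1/2) (by norm_num : (0:ℝ) < 1/2) (by norm_num)
  simp only [smul_eq_mul] at h2
  have he2 : (1/2 : ℝ) * p + (1/2 : ℝ) * q = (p + q) / 2 := by ring
  rw [he2] at h2
  linarith

private lemma strictConvexOn_logGamma :
    StrictConvexOn ℝ (Ioi (0:ℝ)) (Real.log ∘ Real.Gamma) := by
  apply LinearOrder.strictConvexOn_of_lt (convex_Ioi 0)
  intro x hx y hy hxy c d hc hd hcd
  simp only [mem_Ioi] at hx hy
  simp only [smul_eq_mul, Function.comp_apply]
  set μ : ℝ := min c d / 2 with hμdef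
  have hμ : 0 < μ := by positivity
  have hμc : μ < c := by
    have := min_le_left c d; simp only [hμdef]; linarith [min_le_left c d]
  have hμd : μ < d := by
    simp only [hμdef]; linarith [min_le_right c d]
  set u : ℝ := (c + μ) * x + (d - μ) * y with hu
  set v : ℝ := (c - μ) * x + (d + μ) * y with hv
  have hupos : 0 < u := by
    have : 0 < c + μ := by linarith
    have : 0 < d - μ := by linarith
    nlinarith
  have hvpos : 0 < v := by nlinarith
  have huv : u < v := by
    have : u - v = 2 * μ * (x - y) := by ring
    nlinarith
  have hmid := logGamma_midpoint_lt u v hupos huv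
  have hmideq : (u + v) / 2 = c * x + d * y := by simp only [hu, hv]; ring
  rw [hmideq] at hmid
  have hconv := Real.convexOn_log_Gamma
  have h1 := hconv.2 (mem_Ioi.2 hx) (mem_Ioi.2 hy)
    (by linarith : (0:ℝ) ≤ c + μ) (by linarith : (0:ℝ) ≤ d - μ) (by linarith)
  have h2 := hconv.2 (mem_Ioi.2 hx) (mem_Ioi.2 hy)
    (by linarith : (0:ℝ) ≤ c - μ) (by linarith : (0:ℝ) ≤ d + μ) (by linarith)
  simp only [smul_eq_mul, Function.comp_apply] at h1 h2
  rw [← hu] at h1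
  rw [← hv] at h2
  linarith

theorem gamma_ratio_strictMono (a b : ℝ) (hab : a < b) :
    StrictMonoOn (fun x : ℝ => Real.Gamma (x - a) / Real.Gamma (x - b))
      {x : ℝ | 0 < x - a ∧ 0 < x - b} := by
  intro x hx y hy hxy
  simp only [mem_setOf_eq] at hx hy
  obtain ⟨hxa, hxb⟩ := hx
  obtain ⟨hya, hyb⟩ := hy
  set f : ℝ → ℝ := Real.log ∘ Real.Gamma with hf
  set δ : ℝ := b - a with hδ
  have hδpos : 0 < δ := by simp [hδ]; linarith
  set A : ℝ := x - b with hA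
  set B : ℝ := y - b with hB
  have hAB : A < B := by simp [hA, hB]; linarith
  have hApos : 0 < A := hxb
  have hBpos : 0 < B := hyb
  have hxaA : x - a = A + δ := by simp [hA, hδ]
  have hyaB : y - a = B + δ := by simp [hB, hδ]
  set L : ℝ := B + δ - A with hL
  have hLδ : δ < L := by simp [hL]; linarith
  have hLpos : 0 < L := by linarith
  set μ : ℝ := δ / L with hμ
  have hμpos : 0 < μ := div_pos hδpos hLpos
  have hμlt : μ < 1 := (div_lt_one hLpos).2 hLδ
  have hsc := strictConvexOn_logGamma
  have key1 := hsc.2 (mem_Ioi.2 hApos) (mem_Ioi.2 (by linarith : (0:ℝ) < B + δ))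
    (by intro h; linarith : A ≠ B + δ)
    (by linarith : (0:ℝ) < 1 - μ) hμpos (by ring)
  have key2 := hsc.2 (mem_Ioi.2 hApos) (mem_Ioi.2 (by linarith : (0:ℝ) < B + δ))
    (by intro h; linarith : A ≠ B + δ)
    hμpos (by linarith : (0:ℝ) < 1 - μ) (by ring)
  simp only [smul_eq_mul] at key1 key2
  have he1 : (1 - μ) * A + μ * (B + δ) = A + δ := by
    rw [hμ]; field_simp [hLpos.ne']; rw [hL]; ring
  have he2 : μ * A + (1 - μ) * (B + δ) = B := by
    rw [hμ]; field_simp [hLpos.ne']; rw [hL]; ring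
  rw [he1] at key1
  rw [he2] at key2
  -- f (A+δ) + f B < f A + f (B+δ)
  have hsum : f (A + δ) + f B < f A + f (B + δ) := by
    simp only [hf] at key1 key2 ⊢
    linarith
  have hGpos : ∀ t : ℝ, 0 < t → 0 < Real.Gamma t := fun t ht => Real.Gamma_pos_of_pos ht
  have hsum' : f (A + δ) - f A < f (B + δ) - f B := by linarith
  have hexp := Real.exp_lt_exp.2 hsum'
  simp only [hf, Function.comp_apply] at hexp
  rw [Real.exp_sub, Real.exp_sub, Real.exp_log (hGpos _ (by linarith)),
    Real.exp_log (hGpos _ hApos), Real.exp_log (hGpos _ (by linarith)),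
    Real.exp_log (hGpos _ hBpos)] at hexp
  simpa only [hxaA, hyaB, hA, hB] using hexp
end

section
/- For fixed x in the interior of the unit simplex, the function p ↦ ∏ᵢ xᵢ^{kpᵢ} / B(kp) (the Dirichlet density at x viewed as a function of the parameter p) is log-concave in p on the interior of the unit simplex, for any k > 0. -/
/-- The multivariate beta function `B(α) = ∏ᵢ Γ(αᵢ) / Γ(∑ᵢ αᵢ)`. -/
noncomputable def multiBeta {n : ℕ} (α : Fin n → ℝ) : ℝ :=
  (∏ i, Real.Gamma (α i)) / Real.Gamma (∑ i, α i)

lemma dirichlet_key (k : ℝ) (hk : 0 < k) (x : ℝ) (hx : 0 < x) {a b θ : ℝ}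
    (ha : 0 < a) (hb : 0 < b) (hθ0 : 0 ≤ θ) (hθ1 : θ ≤ 1) :
    (x ^ (k * a) / Real.Gamma (k * a)) ^ θ *
      (x ^ (k * b) / Real.Gamma (k * b)) ^ (1 - θ) ≤
    x ^ (k * (θ * a + (1 - θ) * b)) / Real.Gamma (k * (θ * a + (1 - θ) * b)) := by
  have hw : 0 < θ * a + (1 - θ) * b := by
    rcases eq_or_lt_of_le hθ0 with h | h
    · have h1 : (1 - θ) * b > 0 := by rw [← h]; simpa using hb
      have h2 : θ * a = 0 := by rw [← h]; ring
      linarith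
    · have h1 : 0 ≤ (1 - θ) * b := mul_nonneg (by linarith) hb.le
      have h2 : 0 < θ * a := mul_pos h ha
      linarith
  have e : ∀ t : ℝ, 0 < t → x ^ (k * t) / Real.Gamma (k * t) =
      Real.exp (k * t * Real.log x - Real.log (Real.Gamma (k * t))) := by
    intro t ht
    rw [Real.rpow_def_of_pos hx, Real.exp_sub,
      Real.exp_log (Real.Gamma_pos_of_pos (mul_pos hk ht))]
    ring_nf
  rw [e a ha, e b hb, e _ hw]
  rw [← Real.exp_mul, ← Real.exp_mul, ← Real.exp_add, Real.exp_le_exp]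
  have hconv := Real.convexOn_log_Gamma.2 (Set.mem_Ioi.mpr (mul_pos hk ha))
    (Set.mem_Ioi.mpr (mul_pos hk hb)) hθ0 (by linarith : (0:ℝ) ≤ 1 - θ) (by ring)
  simp only [smul_eq_mul, Function.comp_apply] at hconv
  have heq : θ * (k * a) + (1 - θ) * (k * b) = k * (θ * a + (1 - θ) * b) := by ring
  rw [heq] at hconv
  nlinarith [hconv]

theorem dirichlet_density_logConcave_in_p (n : ℕ) (k : ℝ) (hk : 0 < k)
    (x : Fin n → ℝ) (hx : ∀ i, 0 < x i) (hxsum : ∑ i, x i = 1) :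
    ∀ u : Fin n → ℝ, ((∀ i, 0 < u i) ∧ ∑ i, u i = 1) →
    ∀ v : Fin n → ℝ, ((∀ i, 0 < v i) ∧ ∑ i, v i = 1) →
    ∀ θ : ℝ, θ ∈ Set.Icc (0:ℝ) 1 →
      ((∏ i, x i ^ (k * u i)) / multiBeta (fun i => k * u i)) ^ θ *
          ((∏ i, x i ^ (k * v i)) / multiBeta (fun i => k * v i)) ^ (1 - θ) ≤
        (∏ i, x i ^ (k * (θ • u + (1 - θ) • v) i)) /
          multiBeta (fun i => k * (θ • u + (1 - θ) • v) i) := by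
  rintro u ⟨hu, husum⟩ v ⟨hv, hvsum⟩ θ ⟨hθ0, hθ1⟩
  have hΓk : 0 < Real.Gamma k := Real.Gamma_pos_of_pos hk
  simp only [Pi.add_apply, Pi.smul_apply, smul_eq_mul]
  set w : Fin n → ℝ := fun i => θ * u i + (1 - θ) * v i with hwdef
  have hw : ∀ i, 0 < w i := by
    intro i
    rcases eq_or_lt_of_le hθ0 with h | h
    · have h1 : (1 - θ) * v i > 0 := by rw [← h]; simpa using hv i
      have h2 : θ * u i = 0 := by rw [← h]; ring
      simp only [hwdef]; linarith
    · have h1 : 0 ≤ (1 - θ) * v i := mul_nonneg (by linarith) (hv i).le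
      have h2 : 0 < θ * u i := mul_pos h (hu i)
      simp only [hwdef]; linarith
  have hwsum : ∑ i, w i = 1 := by
    simp only [hwdef, Finset.sum_add_distrib, ← Finset.mul_sum, husum, hvsum]; ring
  have hfact : ∀ p : Fin n → ℝ, (∀ i, 0 < p i) → ∑ i, p i = 1 →
      (∏ i, x i ^ (k * p i)) / multiBeta (fun i => k * p i) =
        Real.Gamma k * ∏ i, (x i ^ (k * p i) / Real.Gamma (k * p i)) := by
    intro p hp hpsum
    have hs : ∑ i, k * p i = k := by rw [← Finset.mul_sum, hpsum, mul_one]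
    have hGne : (∏ i, Real.Gamma (k * p i)) ≠ 0 :=
      (Finset.prod_pos fun i _ => Real.Gamma_pos_of_pos (mul_pos hk (hp i))).ne'
    rw [multiBeta, hs, Finset.prod_div_distrib]
    field_simp
  have hmain : (∏ i, x i ^ (k * w i)) / multiBeta (fun i => k * w i) =
      Real.Gamma k * ∏ i, (x i ^ (k * w i) / Real.Gamma (k * w i)) :=
    hfact w hw hwsum
  rw [hfact u hu husum, hfact v hv hvsum, hmain]
  have hnn : ∀ (p : Fin n → ℝ), (∀ i, 0 < p i) →
      ∀ i, (0:ℝ) ≤ x i ^ (k * p i) / Real.Gamma (k * p i) := fun p hp i =>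
    div_nonneg (Real.rpow_nonneg (hx i).le _)
      (Real.Gamma_pos_of_pos (mul_pos hk (hp i))).le
  have hPu : (0:ℝ) ≤ ∏ i, x i ^ (k * u i) / Real.Gamma (k * u i) :=
    Finset.prod_nonneg fun i _ => hnn u hu i
  have hPv : (0:ℝ) ≤ ∏ i, x i ^ (k * v i) / Real.Gamma (k * v i) :=
    Finset.prod_nonneg fun i _ => hnn v hv i
  rw [Real.mul_rpow hΓk.le hPu, Real.mul_rpow hΓk.le hPv]
  have hΓθ : Real.Gamma k ^ θ * Real.Gamma k ^ (1 - θ) = Real.Gamma k := by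
    rw [← Real.rpow_add hΓk]; norm_num
  calc Real.Gamma k ^ θ * (∏ i, x i ^ (k * u i) / Real.Gamma (k * u i)) ^ θ *
        (Real.Gamma k ^ (1 - θ) * (∏ i, x i ^ (k * v i) / Real.Gamma (k * v i)) ^ (1 - θ))
      = Real.Gamma k * ((∏ i, x i ^ (k * u i) / Real.Gamma (k * u i)) ^ θ *
          (∏ i, x i ^ (k * v i) / Real.Gamma (k * v i)) ^ (1 - θ)) := by
        rw [mul_mul_mul_comm, hΓθ]
    _ = Real.Gamma k * ∏ i, (x i ^ (k * u i) / Real.Gamma (k * u i)) ^ θ *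
          (x i ^ (k * v i) / Real.Gamma (k * v i)) ^ (1 - θ) := by
        rw [← Real.finset_prod_rpow _ _ (fun i _ => hnn u hu i),
          ← Real.finset_prod_rpow _ _ (fun i _ => hnn v hv i),
          ← Finset.prod_mul_distrib]
    _ ≤ Real.Gamma k * ∏ i, x i ^ (k * w i) / Real.Gamma (k * w i) := by
        apply mul_le_mul_of_nonneg_left _ hΓk.le
        apply Finset.prod_le_prod
        · intro i _
          exact mul_nonneg (Real.rpow_nonneg (hnn u hu i) _)
            (Real.rpow_nonneg (hnn v hv i) _)
        · intro i _
          exact dirichlet_key k hk (x i) (hx i) (hu i) (hv i) hθ0 hθ1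
end
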